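/- Let A, B, n be natural numbers with B > 2^n, and set θ = ⌊B/2^n⌋ (so θ ≥ 1). Then |(⌊A/θ⌋)/2^n − A/B| ≤ A·2^n/(B·(B − 2^n)) + 2^{−n}, where the quotient ⌊A/θ⌋ is natural-number division and the other operations are over the reals. -/

import Mathlib

/-- Accuracy of the shift-based integer division scheme of the division neuron group:
with threshold `θ = ⌊B / 2^n⌋` (where `B > 2^n`), the decoded value `⌊A/θ⌋ / 2^n`
approximates the real quotient `A/B` up to `A·2^n/(B·(B - 2^n)) + 2⁻ⁿ`. -/
theorem shift_based_integer_division_accuracy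
    (A B n : ℕ) (hB : 2 ^ n < B) (θ : ℕ) (hθ : θ = B / 2 ^ n) :
    |((A / θ : ℕ) : ℝ) / 2 ^ n - (A : ℝ) / (B : ℝ)| ≤
      (A : ℝ) * 2 ^ n / ((B : ℝ) * ((B : ℝ) - 2 ^ n)) + (2 : ℝ) ^ (-(n : ℤ)) := by
  have h2n : 0 < 2 ^ n := Nat.pow_pos (by norm_num)
  have hθpos : 0 < θ := by rw [hθ]; exact Nat.div_pos hB.le h2n
  have hqθ : A / θ * θ ≤ A := Nat.div_mul_le_self A θ
  have hqθ2 : A < A / θ * θ + θ := by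
    have h1 := Nat.div_add_mod A θ
    have h2 := Nat.mod_lt A hθpos
    have h3 : θ * (A / θ) = A / θ * θ := Nat.mul_comm _ _
    omega
  have hθB : θ * 2 ^ n ≤ B := by rw [hθ]; exact Nat.div_mul_le_self B (2 ^ n)
  have hθB2 : B < θ * 2 ^ n + 2 ^ n := by
    have h1 := Nat.div_add_mod B (2 ^ n)
    have h2 := Nat.mod_lt B h2n
    have h3 : 2 ^ n * (B / 2 ^ n) = B / 2 ^ n * 2 ^ n := Nat.mul_comm _ _
    have h4 : θ * 2 ^ n = B / 2 ^ n * 2 ^ n := by rw [hθ]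
    omega
  set q : ℕ := A / θ with hq
  -- cast to ℝ
  have hB0 : (0:ℝ) < B := by exact_mod_cast (h2n.trans hB)
  have h2R : (0:ℝ) < 2 ^ n := by positivity
  have hθR : (0:ℝ) < θ := by exact_mod_cast hθpos
  have hBd : (0:ℝ) < (B:ℝ) - 2 ^ n := by
    have : (2:ℝ) ^ n < B := by exact_mod_cast hB
    linarith
  have hq0 : (0:ℝ) ≤ (q:ℝ) := Nat.cast_nonneg q
  have c1 : (q:ℝ) * θ ≤ A := by exact_mod_cast hqθ
  have c2 : (A:ℝ) < q * θ + θ := by exact_mod_cast hqθ2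
  have c3 : (θ:ℝ) * 2 ^ n ≤ B := by exact_mod_cast hθB
  have c4 : (B:ℝ) < θ * 2 ^ n + 2 ^ n := by exact_mod_cast hθB2
  rw [zpow_neg, zpow_natCast, abs_le]
  constructor
  · have h1 : (0:ℝ) ≤ (A:ℝ) * 2 ^ n / ((B:ℝ) * ((B:ℝ) - 2 ^ n)) := by positivity
    have h2 : (A:ℝ) / B ≤ ((q:ℝ) + 1) / 2 ^ n := by
      rw [div_le_div_iff₀ hB0 h2R]
      nlinarith
    have h3 : ((q:ℝ) + 1) / 2 ^ n = (q:ℝ) / 2 ^ n + (2 ^ n : ℝ)⁻¹ := by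
      field_simp
    linarith
  · have hA2 : (q:ℝ) * θ * 2 ^ n ≤ A * 2 ^ n := mul_le_mul_of_nonneg_right c1 h2R.le
    have h5 : (q:ℝ) * B ≤ A * 2 ^ n + q * 2 ^ n := by
      nlinarith [mul_le_mul_of_nonneg_left c4.le hq0]
    have h6 : (q:ℝ) * ((B:ℝ) - 2 ^ n) ≤ A * 2 ^ n := by
      nlinarith [mul_le_mul_of_nonneg_left c4.le hq0]
    have step1 : (q:ℝ) / 2 ^ n - A / B ≤ A * 2 ^ n / (B * ((B:ℝ) - 2 ^ n)) := by
      rw [div_sub_div _ _ h2R.ne' hB0.ne', div_le_div_iff₀ (by positivity) (by positivity)]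
      nlinarith [mul_le_mul_of_nonneg_right h5 (mul_nonneg hB0.le hBd.le),
        mul_le_mul_of_nonneg_right h6 (mul_nonneg h2R.le hB0.le)]
    have h4 : (0:ℝ) < (2 ^ n : ℝ)⁻¹ := by positivity
    linarith
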